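/- Let Q^π be the fixed point of T^π and Q^π_k the fixed point of T^π_k = (T^δ)^{k-1} ∘ T^π, where T^π f = r + γ P^π f and T^δ f = r + γ P^δ f with ‖P^π‖ ≤ 1 (sup-norm operator bound) and 0 ≤ γ < 1. Then Q^π − Q^π_k = (Id − γ^k (P^π)^k)^{-1} ( (T^π)^k Q^π_k − (T^δ)^{k-1} T^π Q^π_k ), where the inverse is given by the Neumann series ∑_{j≥0} γ^{kj} (P^π)^{kj}. -/

import Mathlib

set_option maxHeartbeats 1000000 in
theorem stmt_6 {S A : Type*} [Fintype S] [Fintype A]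
    (Pπ Pδ : ((S × A) → ℝ) →L[ℝ] ((S × A) → ℝ))
    (hPπ : ‖Pπ‖ ≤ 1) (hPδ : ‖Pδ‖ ≤ 1)
    (r : (S × A) → ℝ) (γ : ℝ) (hγ0 : 0 ≤ γ) (hγ1 : γ < 1)
    (k : ℕ) (hk : 1 ≤ k)
    (Tπ Tδ : ((S × A) → ℝ) → ((S × A) → ℝ))
    (hTπ : ∀ f, Tπ f = r + γ • Pπ f) (hTδ : ∀ f, Tδ f = r + γ • Pδ f)
    (Qπ Qπk : (S × A) → ℝ)
    (hQπ : Tπ Qπ = Qπ) (hQπk : Tδ^[k - 1] (Tπ Qπk) = Qπk) :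
    Qπ - Qπk =
      ∑' j : ℕ, γ ^ (k * j) • (⇑Pπ)^[k * j] (Tπ^[k] Qπk - Tδ^[k - 1] (Tπ Qπk)) := by
  have hdiff : ∀ (n : ℕ) (f g : (S × A) → ℝ),
      Tπ^[n] f - Tπ^[n] g = γ ^ n • (⇑Pπ)^[n] (f - g) := by
    intro n
    induction n with
    | zero => intro f g; simp
    | succ n ih =>
      intro f g
      rw [Function.iterate_succ_apply', Function.iterate_succ_apply',
        Function.iterate_succ_apply', hTπ, hTπ]
      have h1 : (r + γ • Pπ (Tπ^[n] f)) - (r + γ • Pπ (Tπ^[n] g))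
          = γ • Pπ (Tπ^[n] f - Tπ^[n] g) := by
        rw [map_sub, smul_sub]; abel
      rw [h1, ih, map_smul, smul_smul, ← pow_succ']
  set M : ((S × A) → ℝ) →L[ℝ] ((S × A) → ℝ) := γ ^ k • Pπ ^ k with hMdef
  have hMapp : ∀ x : (S × A) → ℝ, M x = γ ^ k • (⇑Pπ)^[k] x := by
    intro x
    simp [hMdef, ContinuousLinearMap.smul_apply, ← ContinuousLinearMap.coe_pow]
  set e : (S × A) → ℝ := Qπ - Qπk with he
  set b : (S × A) → ℝ := Tπ^[k] Qπk - Qπk with hb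
  have hfixit : Tπ^[k] Qπ = Qπ := Function.iterate_fixed hQπ k
  have h2 := hdiff k Qπ Qπk
  rw [hfixit] at h2
  have hee : e = M e + b := by
    rw [hb, he, hMapp, ← h2]
    abel
  have hγk : γ ^ k < 1 := pow_lt_one₀ hγ0 hγ1 (by omega)
  have hγk0 : (0:ℝ) ≤ γ ^ k := pow_nonneg hγ0 k
  have hMnorm : ‖M‖ ≤ γ ^ k := by
    rw [hMdef]
    calc ‖γ ^ k • Pπ ^ k‖ ≤ ‖(γ ^ k : ℝ)‖ * ‖Pπ ^ k‖ := ContinuousLinearMap.opNorm_smul_le _ _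
    _ ≤ γ ^ k * 1 := by
        apply mul_le_mul (le_of_eq (by rw [Real.norm_eq_abs, abs_of_nonneg hγk0])) ?_
          (norm_nonneg _) hγk0
        calc ‖Pπ ^ k‖ ≤ ‖Pπ‖ ^ k := norm_pow_le' Pπ (by omega)
        _ ≤ 1 := pow_le_one₀ (norm_nonneg _) hPπ
    _ = γ ^ k := mul_one _
  have hterm : ∀ (j : ℕ) (x : (S × A) → ℝ), ‖(M ^ j) x‖ ≤ (γ ^ k) ^ j * ‖x‖ := by
    intro j
    induction j with
    | zero => intro x; simp
    | succ j ih =>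
      intro x
      rw [pow_succ', ContinuousLinearMap.mul_apply]
      calc ‖M ((M ^ j) x)‖ ≤ ‖M‖ * ‖(M ^ j) x‖ := M.le_opNorm _
      _ ≤ γ ^ k * ((γ ^ k) ^ j * ‖x‖) := by
          apply mul_le_mul hMnorm (ih x) (norm_nonneg _) hγk0
      _ = (γ ^ k) ^ (j + 1) * ‖x‖ := by ring
  have htel : ∀ n : ℕ, ∑ j ∈ Finset.range n, (M ^ j) b = e - (M ^ n) e := by
    intro n
    induction n with
    | zero => simp
    | succ n ih =>
      have hMe : M e = e - b := by
        conv_rhs => rw [hee]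
        abel
      have h3 : (M ^ (n + 1)) e = (M ^ n) e - (M ^ n) b := by
        rw [pow_succ, ContinuousLinearMap.mul_apply, hMe, map_sub]
      rw [Finset.sum_range_succ, ih, h3]
      abel
  have hsum : Summable (fun j : ℕ => (M ^ j) b) :=
    Summable.of_norm_bounded (g := fun j => (γ ^ k) ^ j * ‖b‖)
      ((summable_geometric_of_lt_one hγk0 hγk).mul_right ‖b‖)
      (fun j => hterm j b)
  have hlim0 : Filter.Tendsto (fun n : ℕ => (M ^ n) e) Filter.atTop (nhds 0) := by
    apply squeeze_zero_norm (fun n => hterm n e)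
    have := (tendsto_pow_atTop_nhds_zero_of_lt_one hγk0 hγk).mul_const ‖e‖
    simpa using this
  have hlim : Filter.Tendsto (fun n : ℕ => ∑ j ∈ Finset.range n, (M ^ j) b)
      Filter.atTop (nhds e) := by
    simp only [htel]
    have := (tendsto_const_nhds (x := e) (f := Filter.atTop (α := ℕ))).sub hlim0
    simpa using this
  have hts : ∑' j : ℕ, (M ^ j) b = e :=
    tendsto_nhds_unique hsum.hasSum.tendsto_sum_nat hlim
  have hMj : ∀ (j : ℕ) (x : (S × A) → ℝ),
      (M ^ j) x = γ ^ (k * j) • (⇑Pπ)^[k * j] x := by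
    intro j
    induction j with
    | zero => intro x; simp
    | succ j ih =>
      intro x
      rw [pow_succ, ContinuousLinearMap.mul_apply, ih, hMapp]
      rw [← FunLike.coe_pow_eq_iterate, map_smul, FunLike.coe_pow_eq_iterate,
        smul_smul, ← pow_add, ← Function.iterate_add_apply]
      congr 2 <;> ring
  rw [hQπk, ← hb, ← hts]
  exact tsum_congr fun j => hMj j b
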